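/- The function x ↦ φ(x)/Φ(x) (equivalently, x ↦ φ(−x)/(1 − Φ(−x))) is differentiable on ℝ and its derivative lies strictly in the open interval (−1, 0) at every point of ℝ. -/

import Mathlib

open MeasureTheory ProbabilityTheory

/-- Standard normal density. -/
noncomputable def phi (x : ℝ) : ℝ := (Real.sqrt (2 * Real.pi))⁻¹ * Real.exp (-x ^ 2 / 2)

/-- Standard normal CDF. -/
noncomputable def Phi (x : ℝ) : ℝ := ∫ s in Set.Iic x, phi s

/-- Standard normal hazard function (inverse Mills ratio). -/
noncomputable def lam (x : ℝ) : ℝ := phi x / (1 - Phi x)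

/-- Mills-ratio-type function `φ(x)/Φ(x)`. -/
noncomputable def mills (x : ℝ) : ℝ := phi x / Phi x

open Filter Set Real Topology

lemma phi_eq : phi = gaussianPDFReal 0 1 := by
  funext x
  simp [phi, gaussianPDFReal, neg_div]

lemma phi_pos (x : ℝ) : 0 < phi x := by
  unfold phi
  positivity

lemma continuous_phi : Continuous phi := by
  unfold phi
  fun_prop

lemma integrable_phi : Integrable phi := by
  rw [phi_eq]; exact integrable_gaussianPDFReal 0 1

lemma hasDerivAt_phi (x : ℝ) : HasDerivAt phi (-x * phi x) x := by
  have h : HasDerivAt (fun y : ℝ => -y ^ 2 / 2) (-x) x := by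
    have h0 := ((hasDerivAt_pow 2 x).neg).div_const 2
    refine h0.congr_deriv ?_
    push_cast
    ring
  have h2 := (h.exp).const_mul (Real.sqrt (2 * Real.pi))⁻¹
  refine h2.congr_deriv ?_
  unfold phi; ring

lemma tendsto_phi_atBot : Tendsto phi atBot (𝓝 0) := by
  have hsq : Tendsto (fun x : ℝ => x ^ 2 / 2) atBot atTop := by
    apply Tendsto.atTop_div_const (by norm_num : (0:ℝ) < 2)
    have : Tendsto (fun x : ℝ => (-x) ^ 2) atBot atTop :=
      (tendsto_pow_atTop (by norm_num)).comp tendsto_neg_atBot_atTop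
    simpa using this
  have h1 : Tendsto (fun x : ℝ => -x ^ 2 / 2) atBot atBot := by
    have := tendsto_neg_atTop_atBot.comp hsq
    refine this.congr fun x => ?_
    simp [Function.comp, neg_div]
  have h2 : Tendsto (fun x : ℝ => Real.exp (-x ^ 2 / 2)) atBot (𝓝 0) :=
    Real.tendsto_exp_atBot.comp h1
  have h3 := h2.const_mul (Real.sqrt (2 * Real.pi))⁻¹
  rw [mul_zero] at h3
  exact h3.congr fun x => rfl

lemma tendsto_mul_phi_atBot : Tendsto (fun x => x * phi x) atBot (𝓝 0) := by
  have hg : Tendsto (fun x : ℝ => (Real.sqrt (2 * Real.pi))⁻¹ *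
      ((x ^ 2 / 2) * Real.exp (-(x ^ 2 / 2)))) atBot (𝓝 0) := by
    have h1 : Tendsto (fun u : ℝ => u * Real.exp (-u)) atTop (𝓝 0) := by
      simpa using Real.tendsto_pow_mul_exp_neg_atTop_nhds_zero 1
    have h2 : Tendsto (fun x : ℝ => x ^ 2 / 2) atBot atTop := by
      apply Tendsto.atTop_div_const (by norm_num : (0:ℝ) < 2)
      have : Tendsto (fun x : ℝ => (-x) ^ 2) atBot atTop :=
        (tendsto_pow_atTop (by norm_num)).comp tendsto_neg_atBot_atTop
      simpa using this
    have := (h1.comp h2).const_mul (Real.sqrt (2 * Real.pi))⁻¹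
    simpa [Function.comp] using this
  apply squeeze_zero_norm' _ hg
  filter_upwards [eventually_le_atBot (-2 : ℝ)] with x hx
  have hx2 : -x ≤ x ^ 2 / 2 := by nlinarith
  have hphi := (phi_pos x).le
  have : ‖x * phi x‖ = -x * phi x := by
    rw [Real.norm_eq_abs, abs_mul, abs_of_nonneg hphi, abs_of_nonpos (by linarith : x ≤ 0)]
  rw [this, phi]
  have he : -x ^ 2 / 2 = -(x ^ 2 / 2) := by ring
  rw [he]
  have hsqrt : (0:ℝ) ≤ (Real.sqrt (2 * Real.pi))⁻¹ := by positivity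
  have hexp : (0:ℝ) ≤ Real.exp (-(x ^ 2 / 2)) := (Real.exp_pos _).le
  nlinarith [mul_le_mul_of_nonneg_right hx2 hexp]

lemma hasDerivAt_Phi (x : ℝ) : HasDerivAt Phi (phi x) x := by
  have key : ∀ y : ℝ, Phi y = Phi 0 + ∫ t in (0:ℝ)..y, phi t := by
    intro y
    have := intervalIntegral.integral_Iic_sub_Iic (integrable_phi.integrableOn (s := Set.Iic 0))
      (integrable_phi.integrableOn (s := Set.Iic y))
    unfold Phi
    linarith
  have hd : HasDerivAt (fun y : ℝ => Phi 0 + ∫ t in (0:ℝ)..y, phi t) (phi x) x := by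
    exact (intervalIntegral.integral_hasDerivAt_right
      (integrable_phi.intervalIntegrable)
      (continuous_phi.stronglyMeasurableAtFilter volume (𝓝 x))
      continuous_phi.continuousAt).const_add (Phi 0)
  exact hd.congr_of_eventuallyEq (Filter.Eventually.of_forall key)

lemma Phi_pos (x : ℝ) : 0 < Phi x := by
  unfold Phi
  rw [setIntegral_pos_iff_support_of_nonneg_ae
    (Filter.Eventually.of_forall fun s => (phi_pos s).le) integrable_phi.integrableOn]
  have hsupp : Function.support phi = Set.univ :=
    Set.eq_univ_of_forall fun y => (phi_pos y).ne'
  rw [hsupp, Set.univ_inter, Real.volume_Iic]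
  exact ENNReal.zero_lt_top

lemma tendsto_Phi_atBot : Tendsto Phi atBot (𝓝 0) := by
  have key : ∀ x : ℝ, Phi x = ∫ s, Set.indicator (Set.Iic x) phi s := by
    intro x; rw [integral_indicator measurableSet_Iic]; rfl
  have h : Tendsto (fun x : ℝ => ∫ s, Set.indicator (Set.Iic x) phi s) atBot
      (𝓝 (∫ _ : ℝ, (0:ℝ))) := by
    apply tendsto_integral_filter_of_dominated_convergence phi
    · exact Filter.Eventually.of_forall fun x =>
        (continuous_phi.aestronglyMeasurable).indicator measurableSet_Iic
    · refine Filter.Eventually.of_forall fun x => Filter.Eventually.of_forall fun s => ?_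
      rw [Set.indicator_apply]
      split_ifs
      · rw [Real.norm_eq_abs, abs_of_nonneg (phi_pos s).le]
      · simpa using (phi_pos s).le
    · exact integrable_phi
    · refine Filter.Eventually.of_forall fun s => ?_
      apply Tendsto.congr' _ tendsto_const_nhds
      filter_upwards [eventually_lt_atBot s] with x hx
      exact (Set.indicator_of_notMem (by simpa using hx.not_ge) phi).symm
  simp only [integral_zero] at h
  exact h.congr fun x => (key x).symm

/-- Helper: a function strictly increasing below (and at) `x` with limit `0` at `-∞`
is positive at `x`. -/
lemma pos_helper {f : ℝ → ℝ} {x : ℝ} (hm : ∀ y z, y < z → z ≤ x → f y < f z)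
    (h0 : Tendsto f atBot (𝓝 0)) : 0 < f x := by
  have h1 : (0:ℝ) ≤ f (x - 1) := by
    apply le_of_tendsto h0
    filter_upwards [eventually_le_atBot (x - 1)] with z hz
    rcases lt_or_eq_of_le hz with h | h
    · exact (hm _ _ h (by linarith)).le
    · rw [h]
  exact h1.trans_lt (hm _ _ (by linarith) le_rfl)

/-- Strict Mills bound: `Φ(x) < φ(x)/(-x)` for `x < 0`. -/
lemma Phi_lt_mills {x : ℝ} (hx : x < 0) : Phi x < -(phi x / x) := by
  set H : ℝ → ℝ := fun y => -(phi y / y) - Phi y with hH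
  have hderiv : ∀ y : ℝ, y < 0 → HasDerivAt H (phi y / y ^ 2) y := by
    intro y hy
    have hy' : y ≠ 0 := hy.ne
    have h1 : HasDerivAt (fun z : ℝ => phi z / z) ((-y * phi y * y - phi y) / y ^ 2) y := by
      have := (hasDerivAt_phi y).div (hasDerivAt_id y) hy'
      exact this.congr_deriv (by simp)
    have h2 := (h1.neg).sub (hasDerivAt_Phi y)
    refine h2.congr_deriv ?_
    have hy2 : y ^ 2 ≠ 0 := pow_ne_zero 2 hy'
    field_simp
    ring
  have hmono : ∀ y z, y < z → z ≤ x → H y < H z := by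
    intro y z hyz hzx
    have : StrictMonoOn H (Set.Iic x) := by
      apply strictMonoOn_of_deriv_pos (convex_Iic x)
      · intro u hu
        exact ((hderiv u (lt_of_le_of_lt hu hx)).continuousAt).continuousWithinAt
      · intro u hu
        rw [interior_Iic] at hu
        have hu0 : u < 0 := hu.trans hx
        rw [(hderiv u hu0).deriv]
        exact div_pos (phi_pos u) (by nlinarith)
    exact this (by exact le_of_lt (lt_of_lt_of_le hyz hzx)) hzx hyz
  have h0 : Tendsto H atBot (𝓝 0) := by
    have h1 : Tendsto (fun y => -(phi y / y)) atBot (𝓝 0) := by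
      apply squeeze_zero_norm' _ tendsto_phi_atBot
      filter_upwards [eventually_le_atBot (-1 : ℝ)] with y hy
      have hp := (phi_pos y).le
      rw [norm_neg, Real.norm_eq_abs, abs_div, abs_of_nonneg hp]
      have : (1:ℝ) ≤ |y| := by rw [abs_of_nonpos (by linarith)]; linarith
      calc phi y / |y| ≤ phi y / 1 := by
            apply div_le_div_of_nonneg_left hp one_pos this
        _ = phi y := div_one _
    have := h1.sub tendsto_Phi_atBot
    simpa using this
  have := pos_helper hmono h0
  simp only [hH] at this
  linarith

lemma G_pos (x : ℝ) : 0 < phi x + x * Phi x := by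
  set G : ℝ → ℝ := fun y => phi y + y * Phi y with hG
  have hderiv : ∀ y : ℝ, HasDerivAt G (Phi y) y := by
    intro y
    have h := (hasDerivAt_phi y).add ((hasDerivAt_id y).mul (hasDerivAt_Phi y))
    simp only [id_eq, one_mul] at h
    refine h.congr_deriv ?_
    ring
  have hmono : StrictMono G :=
    strictMono_of_deriv_pos fun y => by rw [(hderiv y).deriv]; exact Phi_pos y
  have h0 : Tendsto G atBot (𝓝 0) := by
    have h1 : Tendsto (fun y => y * Phi y) atBot (𝓝 0) := by
      apply squeeze_zero_norm' _ tendsto_phi_atBot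
      filter_upwards [eventually_le_atBot (-1 : ℝ)] with y hy
      have hy0 : y < 0 := by linarith
      have hb := (Phi_lt_mills hy0).le
      have hPp := (Phi_pos y).le
      rw [Real.norm_eq_abs, abs_mul, abs_of_nonpos hy0.le, abs_of_nonneg hPp]
      have hmul : -y * Phi y ≤ -y * (-(phi y / y)) :=
        mul_le_mul_of_nonneg_left hb (by linarith)
      have hq : phi y / y * y = phi y := div_mul_cancel₀ _ hy0.ne
      nlinarith [hmul, hq]
    have := tendsto_phi_atBot.add h1
    simpa using this
  exact pos_helper (f := G) (fun y z hyz _ => hmono hyz) h0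

lemma G2_pos (x : ℝ) : 0 < (1 + x ^ 2) * Phi x + x * phi x := by
  set G2 : ℝ → ℝ := fun y => (1 + y ^ 2) * Phi y + y * phi y with hG2
  have hderiv : ∀ y : ℝ, HasDerivAt G2 (2 * (phi y + y * Phi y)) y := by
    intro y
    have h1 : HasDerivAt (fun z : ℝ => (1 + z ^ 2)) (2 * y) y := by
      have := (hasDerivAt_pow 2 y).const_add 1
      simpa using this
    have h := (h1.mul (hasDerivAt_Phi y)).add
      ((hasDerivAt_id y).mul (hasDerivAt_phi y))
    simp only [id_eq, one_mul] at h
    refine h.congr_deriv ?_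
    ring
  have hmono : StrictMono G2 :=
    strictMono_of_deriv_pos fun y => by
      rw [(hderiv y).deriv]; have := G_pos y; linarith
  have h0 : Tendsto G2 atBot (𝓝 0) := by
    have h1 : Tendsto (fun y : ℝ => y ^ 2 * Phi y) atBot (𝓝 0) := by
      have hb0 : Tendsto (fun y : ℝ => -(y * phi y)) atBot (𝓝 0) := by
        simpa using tendsto_mul_phi_atBot.neg
      apply squeeze_zero_norm' _ hb0
      filter_upwards [eventually_le_atBot (-1 : ℝ)] with y hy
      have hy0 : y < 0 := by linarith
      have hb := (Phi_lt_mills hy0).le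
      have hPp := (Phi_pos y).le
      rw [Real.norm_eq_abs, abs_of_nonneg (by positivity)]
      have h2 : y ^ 2 * Phi y ≤ y ^ 2 * (-(phi y / y)) :=
        mul_le_mul_of_nonneg_left hb (by positivity)
      have hy' : y ≠ 0 := hy0.ne
      have hq2 : y ^ 2 * (phi y / y) = y * phi y := by field_simp
      have h4 : y ^ 2 * (-(phi y / y)) = -(y * phi y) := by rw [mul_neg, hq2]
      linarith
    have h2 : Tendsto (fun y : ℝ => (1 + y ^ 2) * Phi y) atBot (𝓝 0) := by
      have h3 := (tendsto_Phi_atBot.add h1).congr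
        (fun y : ℝ => by ring : ∀ y : ℝ, Phi y + y ^ 2 * Phi y = (1 + y ^ 2) * Phi y)
      simpa using h3
    have := h2.add tendsto_mul_phi_atBot
    simpa using this
  exact pos_helper (f := G2) (fun y z hyz _ => hmono hyz) h0

lemma F_pos (x : ℝ) : 0 < Phi x ^ 2 - x * phi x * Phi x - phi x ^ 2 := by
  set F : ℝ → ℝ := fun y => Phi y ^ 2 - y * phi y * Phi y - phi y ^ 2 with hF
  have hderiv : ∀ y : ℝ, HasDerivAt F (phi y * ((1 + y ^ 2) * Phi y + y * phi y)) y := by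
    intro y
    have h1 : HasDerivAt (fun z : ℝ => Phi z ^ 2) (2 * Phi y * phi y) y := by
      have := (hasDerivAt_Phi y).pow 2
      refine this.congr_deriv ?_; ring
    have h2 : HasDerivAt (fun z : ℝ => z * phi z * Phi z)
        ((1 * phi y + y * (-y * phi y)) * Phi y + y * phi y * phi y) y :=
      (((hasDerivAt_id y).mul (hasDerivAt_phi y))).mul (hasDerivAt_Phi y)
    have h3 : HasDerivAt (fun z : ℝ => phi z ^ 2) (2 * phi y * (-y * phi y)) y := by
      have := (hasDerivAt_phi y).pow 2
      refine this.congr_deriv ?_; ring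
    have h := (h1.sub h2).sub h3
    refine h.congr_deriv ?_
    ring
  have hmono : StrictMono F :=
    strictMono_of_deriv_pos fun y => by
      rw [(hderiv y).deriv]
      exact mul_pos (phi_pos y) (G2_pos y)
  have h0 : Tendsto F atBot (𝓝 0) := by
    have h1 : Tendsto (fun y : ℝ => Phi y ^ 2) atBot (𝓝 0) := by
      have := tendsto_Phi_atBot.mul tendsto_Phi_atBot
      simpa [sq] using this
    have h2 : Tendsto (fun y : ℝ => y * phi y * Phi y) atBot (𝓝 0) := by
      have := tendsto_mul_phi_atBot.mul tendsto_Phi_atBot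
      simpa using this
    have h3 : Tendsto (fun y : ℝ => phi y ^ 2) atBot (𝓝 0) := by
      have := tendsto_phi_atBot.mul tendsto_phi_atBot
      simpa [sq] using this
    have := (h1.sub h2).sub h3
    simpa using this
  exact pos_helper (f := F) (fun y z hyz _ => hmono hyz) h0

/-- `x ↦ φ(x)/Φ(x)` is differentiable with derivative strictly in `(−1, 0)`. -/
theorem stmt_13 :
    ∀ x : ℝ, DifferentiableAt ℝ (fun y => phi y / Phi y) x ∧
      deriv (fun y => phi y / Phi y) x ∈ Set.Ioo (-1 : ℝ) 0 := by
  intro x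
  have hd : HasDerivAt (fun y => phi y / Phi y)
      ((-x * phi x * Phi x - phi x * phi x) / Phi x ^ 2) x :=
    (hasDerivAt_phi x).div (hasDerivAt_Phi x) (Phi_pos x).ne'
  refine ⟨hd.differentiableAt, ?_⟩
  rw [hd.deriv]
  have hP := Phi_pos x
  have hp := phi_pos x
  have hG := G_pos x
  have hF := F_pos x
  constructor
  · rw [lt_div_iff₀ (by positivity : (0:ℝ) < Phi x ^ 2)]
    nlinarith
  · apply div_neg_of_neg_of_pos _ (by positivity)
    nlinarith
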